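/- For an ICC digraph D with k Type-I paths and n vertices, MAIS(D) = n − k + 1. -/

import Mathlib

/-- An ICC digraph with `k` Type-I paths. `n1 i ≥ 1` is the number of vertices of
Type-I path `P_i`; `n2 i j` is the number of vertices of Type-II path `P_{i,j}`
(`0` if empty, and `n2 i i = 0`); `q i j` (1-based, `1 ≤ q i j ≤ n1 j`) is the
index of the vertex of `P_j` that the arc leaving `P_{i,j}` (or, if `P_{i,j}` is
empty, the arc leaving the terminal vertex of `P_i`) points to. -/
structure ICCDigraph (k : ℕ) where
  n1 : Fin k → ℕ
  hn1 : ∀ i, 1 ≤ n1 i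
  n2 : Fin k → Fin k → ℕ
  hdiag : ∀ i, n2 i i = 0
  q : Fin k → Fin k → ℕ
  hq1 : ∀ i j, 1 ≤ q i j
  hq2 : ∀ i j, q i j ≤ n1 j

namespace ICCDigraph

variable {k : ℕ} (D : ICCDigraph k)

/-- The vertex set: vertices `v_{a+1}^i = ⟨i, a⟩` of Type-I paths (0-based `a`),
and vertices `v_{b+1}^{ij} = ⟨(i,j), b⟩` of Type-II paths. -/
abbrev Vtx : Type :=
  (Σ i : Fin k, Fin (D.n1 i)) ⊕ (Σ p : Fin k × Fin k, Fin (D.n2 p.1 p.2))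

/-- The terminal vertex `v_{n_i}^i` of Type-I path `P_i`. -/
def terminal (i : Fin k) : D.Vtx :=
  Sum.inl ⟨i, ⟨D.n1 i - 1, by have := D.hn1 i; omega⟩⟩

/-- The arc relation of the ICC digraph: arcs along Type-I and Type-II paths,
and the interconnecting arcs. -/
def Arc : D.Vtx → D.Vtx → Prop
  | Sum.inl ⟨i, a⟩, Sum.inl ⟨j, a'⟩ =>
      (i = j ∧ (a' : ℕ) = (a : ℕ) + 1) ∨
      (i ≠ j ∧ (a : ℕ) = D.n1 i - 1 ∧ D.n2 i j = 0 ∧ (a' : ℕ) = D.q i j - 1)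
  | Sum.inl ⟨i, a⟩, Sum.inr ⟨p, b⟩ =>
      i = p.1 ∧ (a : ℕ) = D.n1 i - 1 ∧ (b : ℕ) = 0
  | Sum.inr ⟨p, b⟩, Sum.inr ⟨p', b'⟩ =>
      p = p' ∧ (b' : ℕ) = (b : ℕ) + 1
  | Sum.inr ⟨p, b⟩, Sum.inl ⟨j, a⟩ =>
      p.2 = j ∧ (b : ℕ) = D.n2 p.1 p.2 - 1 ∧ (a : ℕ) = D.q p.1 p.2 - 1

/-- A closed directed walk (cycle) starting and ending at `v`, visiting the
vertices `v :: l`. -/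
def IsClosedWalk (v : D.Vtx) (l : List D.Vtx) : Prop :=
  List.Chain D.Arc v (l ++ [v])

/-- `S` induces an acyclic subdigraph: no directed cycle lies within `S`. -/
def AcyclicOn (S : Finset D.Vtx) : Prop :=
  ¬ ∃ (v : D.Vtx) (l : List D.Vtx), v ∈ S ∧ (∀ u ∈ l, u ∈ S) ∧ D.IsClosedWalk v l

open Classical in
/-- `MAIS(D)`: the maximum order of an acyclic induced subdigraph. -/
noncomputable def mais : ℕ :=
  (Finset.univ.filter fun S : Finset D.Vtx => D.AcyclicOn S).sup Finset.card

/-- The message (1-based index `a`) of the `a`-th vertex of Type-I path `P_i`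
(`0` if out of range). -/
def msgI {t : ℕ} (x : D.Vtx → Fin t → ZMod 2) (i : Fin k) (a : ℕ) :
    Fin t → ZMod 2 :=
  if h : 1 ≤ a ∧ a ≤ D.n1 i then x (Sum.inl ⟨i, ⟨a - 1, by omega⟩⟩) else 0

/-- The message (1-based index `b`) of the `b`-th vertex of Type-II path
`P_{i,j}` (`0` if out of range). -/
def msgII {t : ℕ} (x : D.Vtx → Fin t → ZMod 2) (i j : Fin k) (b : ℕ) :
    Fin t → ZMod 2 :=
  if h : 1 ≤ b ∧ b ≤ D.n2 i j then x (Sum.inr ⟨(i, j), ⟨b - 1, by show b - 1 < D.n2 i j; omega⟩⟩) else 0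

/-- Index set of the ICC code's codewords: the `n_i - 1` codewords along each
Type-I path, the `n_{ij} - 1` codewords along each Type-II path, one codeword per
nonempty Type-II path, and the single codeword `⊕ᵢ x_{n_i}^i`. -/
abbrev CodeIdx : Type :=
  (Σ i : Fin k, Fin (D.n1 i - 1)) ⊕
    ((Σ p : Fin k × Fin k, Fin (D.n2 p.1 p.2 - 1)) ⊕
      (({p : Fin k × Fin k // 1 ≤ D.n2 p.1 p.2}) ⊕ Unit))

/-- The ICC code: `w_a^i = x_a^i ⊕ x_{a+1}^i`, `w_b^{ij} = x_b^{ij} ⊕ x_{b+1}^{ij}`,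
`w_{n_{ij}}^{ij} = x_{n_{ij}}^{ij} ⊕ x_{q_i}^j`, and `w' = ⊕ᵢ x_{n_i}^i`. -/
def code {t : ℕ} (x : D.Vtx → Fin t → ZMod 2) : D.CodeIdx → Fin t → ZMod 2
  | Sum.inl ⟨i, a⟩ => D.msgI x i ((a : ℕ) + 1) + D.msgI x i ((a : ℕ) + 2)
  | Sum.inr (Sum.inl ⟨p, b⟩) =>
      D.msgII x p.1 p.2 ((b : ℕ) + 1) + D.msgII x p.1 p.2 ((b : ℕ) + 2)
  | Sum.inr (Sum.inr (Sum.inl ⟨p, _⟩)) =>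
      D.msgII x p.1 p.2 (D.n2 p.1 p.2) + D.msgI x p.2 (D.q p.1 p.2)
  | Sum.inr (Sum.inr (Sum.inr _)) => ∑ i : Fin k, D.msgI x i (D.n1 i)

end ICCDigraph
namespace ICCDigraph

variable {k : ℕ} (D : ICCDigraph k)

lemma terminal_injective : Function.Injective D.terminal := by
  intro i j h
  simpa [terminal] using congrArg (fun v : D.Vtx => match v with | Sum.inl s => s.1 | Sum.inr _ => i) h

lemma height_chain {S : Finset D.Vtx} {h : D.Vtx → ℕ}
    (H : ∀ u v, u ∈ S → v ∈ S → D.Arc u v → h u < h v) :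
    ∀ (l : List D.Vtx) (a b : D.Vtx), List.Chain D.Arc a (l ++ [b]) →
      a ∈ S → (∀ u ∈ l, u ∈ S) → b ∈ S → h a < h b := by
  intro l
  induction l with
  | nil =>
    intro a b hc ha _ hb
    rw [List.nil_append, List.Chain, List.chain_cons] at hc
    exact H a b ha hb hc.1
  | cons c l ih =>
    intro a b hc ha hl hb
    rw [List.cons_append, List.Chain, List.chain_cons] at hc
    exact (H a c ha (hl c (by simp)) hc.1).trans
      (ih c b hc.2 (hl c (by simp)) (fun u hu => hl u (by simp [hu])) hb)

lemma acyclicOn_of_height {S : Finset D.Vtx} (h : D.Vtx → ℕ)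
    (H : ∀ u v, u ∈ S → v ∈ S → D.Arc u v → h u < h v) : D.AcyclicOn S := by
  rintro ⟨v, l, hv, hl, hc⟩
  exact lt_irrefl _ (D.height_chain H l v v hc hv hl hv)

lemma isClosedWalk_of_fn (f : ℕ → D.Vtx) (L : ℕ) (hL : 1 ≤ L) (hclose : f L = f 0)
    (harc : ∀ m < L, D.Arc (f m) (f (m+1))) :
    D.IsClosedWalk (f 0) (List.map f (List.range' 1 (L-1))) := by
  have h1 : List.Chain' (fun a b => D.Arc (f a) (f b)) (List.range (L+1)) := by
    rw [List.Chain', show L + 1 = L.succ from rfl, List.isChain_range_succ]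
    exact harc
  have h2 : List.Chain' D.Arc (List.map f (List.range (L+1))) :=
    (List.isChain_map f).2 h1
  have h3 : List.range (L+1) = 0 :: (List.range' 1 (L-1) ++ [L]) := by
    rw [List.range_eq_range', show L + 1 = (L - 1 + 1) + 1 by omega, List.range'_succ,
      List.range'_concat]
    rw [show 1 + 1*(L-1) = L by omega]
  rw [h3, List.map_cons, List.map_append, List.map_cons, List.map_nil, hclose] at h2
  exact h2


lemma lower_acyclic (i0 : Fin k) :
    D.AcyclicOn ((Finset.univ.erase i0).image D.terminal)ᶜ := by
  classical
  set C := (∑ i, D.n1 i) + (∑ p : Fin k × Fin k, D.n2 p.1 p.2) + 1 with hC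
  have hn1C : ∀ i, D.n1 i < C := by
    intro i
    have : D.n1 i ≤ ∑ i, D.n1 i :=
      Finset.single_le_sum (fun i _ => Nat.zero_le _) (Finset.mem_univ i)
    omega
  have hn2C : ∀ i j, D.n2 i j < C := by
    intro i j
    have : D.n2 i j ≤ ∑ p : Fin k × Fin k, D.n2 p.1 p.2 :=
      Finset.single_le_sum (f := fun p : Fin k × Fin k => D.n2 p.1 p.2)
        (fun p _ => Nat.zero_le _) (Finset.mem_univ (i, j))
    omega
  -- membership criterion
  have key : ∀ (i : Fin k) (a : Fin (D.n1 i)),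
      Sum.inl ⟨i, a⟩ ∈ ((Finset.univ.erase i0).image D.terminal)ᶜ →
      (a : ℕ) = D.n1 i - 1 → i = i0 := by
    intro i a hmem ha
    by_contra hne
    rw [Finset.mem_compl] at hmem
    apply hmem
    refine Finset.mem_image.2 ⟨i, Finset.mem_erase.2 ⟨hne, Finset.mem_univ i⟩, ?_⟩
    simp only [terminal, Sum.inl.injEq]
    congr 1
    exact (Fin.ext ha.symm : (⟨D.n1 i - 1, _⟩ : Fin (D.n1 i)) = a)
  apply D.acyclicOn_of_height (fun v => match v with
    | Sum.inl ⟨i, a⟩ => if i = i0 then C + (a : ℕ) else 3*C + (a : ℕ)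
    | Sum.inr ⟨p, b⟩ => if p.1 = i0 then 2*C + (b : ℕ) else (b : ℕ))
  rintro (⟨i, a⟩ | ⟨⟨i, j⟩, b⟩) (⟨i', a'⟩ | ⟨⟨i', j'⟩, b'⟩) hu hv harc
  · -- inl → inl
    simp only [Arc] at harc
    rcases harc with ⟨hii, ha⟩ | ⟨hii, ha, hn, ha'⟩
    · subst hii
      simp only
      split_ifs <;> omega
    · have hi0 : i = i0 := key i a hu ha
      have hi'0 : i' ≠ i0 := fun h => hii (by rw [hi0, h])
      simp only [if_pos hi0, if_neg hi'0]
      have := a.isLt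
      have := hn1C i
      omega
  · -- inl → inr
    simp only [Arc] at harc
    obtain ⟨hii, ha, hb⟩ := harc
    have hi0 : i = i0 := key i a hu ha
    have : i' = i0 := by rw [← hii, hi0]
    simp only [if_pos hi0, if_pos this]
    have := a.isLt
    have := hn1C i
    omega
  · -- inr → inl
    simp only [Arc] at harc
    obtain ⟨hji, hb, ha'⟩ := harc
    by_cases hi0 : i = i0
    · have hj : j ≠ i0 := by
        intro h
        have hb2 : (b : ℕ) < D.n2 i j := b.isLt
        have h0 : D.n2 i j = 0 := by rw [hi0, h]; exact D.hdiag i0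
        omega
      have hi'0 : i' ≠ i0 := by rw [← hji]; exact hj
      simp only [if_pos hi0, if_neg hi'0]
      have := b.isLt
      have := hn2C i j
      omega
    · simp only [if_neg hi0]
      have := b.isLt
      have := hn2C i j
      split_ifs <;> omega
  · -- inr → inr
    simp only [Arc] at harc
    obtain ⟨hpp, hb⟩ := harc
    have h1 : i = i' := congrArg Prod.fst hpp
    subst h1
    simp only
    split_ifs <;> omega


/-- Length of the canonical cycle through terminals `i` and `j`. -/
def clen (i j : Fin k) : ℕ :=
  D.n2 i j + (D.n1 j - D.q i j + 1) + D.n2 j i + (D.n1 i - D.q j i + 1)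

/-- The canonical cycle through terminals `i` and `j` as a function of position. -/
def cyc (i j : Fin k) (m : ℕ) : D.Vtx :=
  if h : 1 ≤ m ∧ m ≤ D.n2 i j then Sum.inr ⟨(i, j), ⟨m - 1, by show m - 1 < D.n2 i j; omega⟩⟩
  else if h : D.n2 i j + 1 ≤ m ∧ m ≤ D.n2 i j + (D.n1 j - D.q i j + 1) then
    Sum.inl ⟨j, ⟨D.q i j - 1 + (m - D.n2 i j - 1), by
      have := D.hq1 i j; have := D.hq2 i j; have := D.hn1 j; omega⟩⟩
  else if h : D.n2 i j + (D.n1 j - D.q i j + 1) + 1 ≤ m ∧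
      m ≤ D.n2 i j + (D.n1 j - D.q i j + 1) + D.n2 j i then
    Sum.inr ⟨(j, i), ⟨m - D.n2 i j - (D.n1 j - D.q i j + 1) - 1, by show _ < D.n2 j i; omega⟩⟩
  else if h : D.n2 i j + (D.n1 j - D.q i j + 1) + D.n2 j i + 1 ≤ m ∧
      m ≤ D.clen i j - 1 then
    Sum.inl ⟨i, ⟨D.q j i - 1 + (m - D.n2 i j - (D.n1 j - D.q i j + 1) - D.n2 j i - 1), by
      have := D.hq1 j i; have := D.hq2 j i; have := D.hn1 i
      simp only [clen] at h; omega⟩⟩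
  else D.terminal i

lemma cyc_zero (i j : Fin k) : D.cyc i j 0 = D.terminal i := by
  simp [cyc]

lemma clen_pos (i j : Fin k) : 2 ≤ D.clen i j := by
  have := D.hq1 i j; have := D.hq2 i j; have := D.hn1 j
  have := D.hq1 j i; have := D.hq2 j i; have := D.hn1 i
  simp only [clen]; omega

lemma cyc_last (i j : Fin k) : D.cyc i j (D.clen i j) = D.terminal i := by
  have := D.hq1 i j; have := D.hq2 i j; have := D.hn1 j
  have := D.hq1 j i; have := D.hq2 j i; have := D.hn1 i
  rw [cyc]
  rw [dif_neg (by simp only [clen]; omega), dif_neg (by simp only [clen]; omega),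
    dif_neg (by simp only [clen]; omega), dif_neg (by simp only [clen]; omega)]

lemma cyc_arc (i j : Fin k) (hij : i ≠ j) :
    ∀ m < D.clen i j, D.Arc (D.cyc i j m) (D.cyc i j (m + 1)) := by
  have hq1 := D.hq1 i j; have hq2 := D.hq2 i j; have hn1j := D.hn1 j
  have hq1' := D.hq1 j i; have hq2' := D.hq2 j i; have hn1i := D.hn1 i
  intro m hm
  rw [show D.clen i j = D.n2 i j + (D.n1 j - D.q i j + 1) + D.n2 j i +
      (D.n1 i - D.q j i + 1) from rfl] at hm
  rw [cyc, cyc]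
  split_ifs
  all_goals simp only [Arc, clen, terminal] at *
  any_goals (first
      | (exfalso; omega)
      | (exact ⟨rfl, by omega⟩)
      | (exact ⟨rfl, by omega, by omega⟩)
      | (exact Or.inl ⟨rfl, by omega⟩)
      | (exact Or.inr ⟨hij, by omega, by omega, by omega⟩)
      | (exact Or.inr ⟨Ne.symm hij, by omega, by omega, by omega⟩)
      | (exact ⟨trivial, by omega⟩)
      | (exact ⟨trivial, by omega, by omega⟩)
      | (exact Or.inl ⟨trivial, by omega⟩)
      | (exact Or.inl ⟨rfl, by omega⟩)
      | (exact ⟨trivial, trivial, by omega⟩)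
      | (exact Or.inr ⟨hij, trivial, by omega, by omega⟩)
      | (exact Or.inr ⟨Ne.symm hij, trivial, by omega, by omega⟩))


lemma not_acyclicOn_of_pair {S : Finset D.Vtx} (i j : Fin k) (hij : i ≠ j)
    (hSi : ∀ a : Fin (D.n1 i), Sum.inl ⟨i, a⟩ ∈ S)
    (hSj : ∀ a : Fin (D.n1 j), Sum.inl ⟨j, a⟩ ∈ S)
    (hSij : ∀ b : Fin (D.n2 i j), Sum.inr ⟨(i, j), b⟩ ∈ S)
    (hSji : ∀ b : Fin (D.n2 j i), Sum.inr ⟨(j, i), b⟩ ∈ S) :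
    ¬ D.AcyclicOn S := by
  intro hAc
  have hmem : ∀ m, D.cyc i j m ∈ S := by
    intro m
    rw [cyc]
    split_ifs
    · exact hSij _
    · exact hSj _
    · exact hSji _
    · exact hSi _
    · simp only [terminal]; exact hSi _
  apply hAc
  refine ⟨D.terminal i, List.map (D.cyc i j) (List.range' 1 (D.clen i j - 1)), ?_, ?_, ?_⟩
  · rw [← D.cyc_zero i j]; exact hmem 0
  · intro u hu
    obtain ⟨m, _, rfl⟩ := List.mem_map.1 hu
    exact hmem m
  · have := D.isClosedWalk_of_fn (D.cyc i j) (D.clen i j) (by have := D.clen_pos i j; omega)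
      (by rw [D.cyc_last, D.cyc_zero]) (D.cyc_arc i j hij)
    rwa [D.cyc_zero] at this

lemma k_le_card : k ≤ Fintype.card D.Vtx := by
  have := Fintype.card_le_of_injective D.terminal D.terminal_injective
  simpa using this

end ICCDigraph

/-- For an ICC digraph with `k` Type-I paths and `n` vertices,
`MAIS(D) = n - k + 1`. -/
theorem stmt8 {k : ℕ} (hk : 1 ≤ k) (D : ICCDigraph k) :
    D.mais = Fintype.card D.Vtx - k + 1 := by
  classical
  have hkn : k ≤ Fintype.card D.Vtx := D.k_le_card
  apply le_antisymm
  · unfold ICCDigraph.mais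
    apply Finset.sup_le
    intro S hS
    have hAc := (Finset.mem_filter.1 hS).2
    by_contra hlt
    push_neg at hlt
    have hSn : S.card ≤ Fintype.card D.Vtx := by
      rw [← Finset.card_univ]; exact Finset.card_le_card (Finset.subset_univ S)
    have hT : Sᶜ.card ≤ k - 2 := by rw [Finset.card_compl]; omega
    set A := Sᶜ.image (fun v : D.Vtx =>
      match v with | Sum.inl s => s.1 | Sum.inr p => p.1.1) with hA
    have hAcard : A.card ≤ k - 2 := le_trans Finset.card_image_le hT
    have h2 : 1 < Aᶜ.card := by
      rw [Finset.card_compl, Fintype.card_fin]; omega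
    obtain ⟨i, hi, j, hj, hij⟩ := Finset.one_lt_card.1 h2
    rw [Finset.mem_compl] at hi hj
    have hmem : ∀ v : D.Vtx,
        (match v with | Sum.inl s => s.1 | Sum.inr p => p.1.1) ∉ A → v ∈ S := by
      intro v hv
      by_contra hvS
      exact hv (Finset.mem_image_of_mem _ (Finset.mem_compl.2 hvS))
    exact D.not_acyclicOn_of_pair i j hij (fun a => hmem (Sum.inl ⟨i, a⟩) hi)
      (fun a => hmem (Sum.inl ⟨j, a⟩) hj) (fun b => hmem (Sum.inr ⟨(i, j), b⟩) hi)
      (fun b => hmem (Sum.inr ⟨(j, i), b⟩) hj) hAc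
  · set i0 : Fin k := ⟨0, hk⟩
    have hS0 := D.lower_acyclic i0
    have hcard : (((Finset.univ.erase i0).image D.terminal)ᶜ).card =
        Fintype.card D.Vtx - k + 1 := by
      rw [Finset.card_compl, Finset.card_image_of_injective _ D.terminal_injective,
        Finset.card_erase_of_mem (Finset.mem_univ i0), Finset.card_univ, Fintype.card_fin]
      omega
    rw [← hcard]
    unfold ICCDigraph.mais
    exact Finset.le_sup (Finset.mem_filter.2 ⟨Finset.mem_univ _, hS0⟩)
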